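/- Let M be a von Neumann subalgebra of R and E = (E_λ) a spectral family in R. Then the family (c_M(E_λ))_{λ∈ℝ} is again a spectral family, i.e., it is increasing, and satisfies ⋀_{μ>λ} c_M(E_μ) = c_M(E_λ) for all λ, with the same boundedness conditions (eventually 0 below and I above). -/
import Mathlib


/-- A bounded spectral family in a complete lattice `L` of projections. -/
structure SpectralFamily (L : Type*) [CompleteLattice L] where
  E : ℝ → L
  mono : Monotone E
  rightCont : ∀ l : ℝ, E l = ⨅ m : Set.Ioi l, E m.1
  eq_bot : ∃ l : ℝ, E l = ⊥
  eq_top : ∃ l : ℝ, E l = ⊤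

/-- The `M`-core of a projection: `c_M(Q) = ⋁{ P ∈ M | P ≤ Q }`. -/
noncomputable def core {L : Type*} [CompleteLattice L] (M : Set L) (Q : L) : L :=
  sSup {p | p ∈ M ∧ p ≤ Q}

lemma core_mem {L : Type*} [CompleteLattice L] (M : Set L)
    (hSup : ∀ S ⊆ M, sSup S ∈ M) (Q : L) : core M Q ∈ M :=
  hSup _ (fun _ hp => hp.1)

lemma core_le {L : Type*} [CompleteLattice L] (M : Set L) (Q : L) : core M Q ≤ Q :=
  sSup_le (fun _ hp => hp.2)

lemma le_core {L : Type*} [CompleteLattice L] {M : Set L} {P Q : L}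
    (hP : P ∈ M) (h : P ≤ Q) : P ≤ core M Q :=
  le_sSup ⟨hP, h⟩

lemma core_mono {L : Type*} [CompleteLattice L] (M : Set L) : Monotone (core M) :=
  fun _ _ h => sSup_le_sSup (fun _ hp => ⟨hp.1, hp.2.trans h⟩)

/-- if `M` is a complete sublattice (projection lattice of a von
Neumann subalgebra) then `(c_M(E_λ))_λ` is again a (bounded) spectral family,
with values in `M`. -/
theorem core_spectralFamily {L : Type*} [CompleteLattice L] (M : Set L)
    (hbot : ⊥ ∈ M) (htop : ⊤ ∈ M)
    (hInf : ∀ S ⊆ M, sInf S ∈ M) (hSup : ∀ S ⊆ M, sSup S ∈ M)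
    (F : SpectralFamily L) :
    ∃ G : SpectralFamily L, (∀ l : ℝ, G.E l = core M (F.E l)) ∧ ∀ l : ℝ, G.E l ∈ M := by
  refine ⟨⟨fun l => core M (F.E l), fun a b h => core_mono M (F.mono h), ?_, ?_, ?_⟩,
    fun l => rfl, fun l => core_mem M hSup _⟩
  · intro l
    apply le_antisymm
    · exact le_iInf fun m => core_mono M (F.mono (le_of_lt m.2))
    · have h1 : (⨅ m : Set.Ioi l, core M (F.E m.1)) ∈ M := by
        rw [iInf, sInf_range] at *
        rw [← sInf_range]
        exact hInf _ (by rintro x ⟨m, rfl⟩; exact core_mem M hSup _)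
      have h2 : (⨅ m : Set.Ioi l, core M (F.E m.1)) ≤ F.E l := by
        rw [F.rightCont l]
        exact le_iInf fun m => (iInf_le _ m).trans (core_le M _)
      exact le_core h1 h2
  · obtain ⟨l, hl⟩ := F.eq_bot
    refine ⟨l, le_antisymm ?_ bot_le⟩
    simpa [hl] using core_le M (⊥ : L)
  · obtain ⟨l, hl⟩ := F.eq_top
    exact ⟨l, le_antisymm le_top (le_core htop (by simp [hl]))⟩
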